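/- arXiv:0706.1808 — 3 statements merged into one kernel-verified Lean document; each statement's English description precedes it below -/
import Mathlib

section
/- If ±v₁, ±v₂, ±v₃ are the six vertices of an affinely regular hexagon inscribed in a centrally symmetric convex domain C ⊂ ℝ², then C + Λ is a lattice packing, where Λ = {2z₁v₁ + 2z₂v₂ : z₁, z₂ ∈ ℤ}. -/
open Pointwise Set

noncomputable section

def IsPacking (C X : Set (ℝ × ℝ)) : Prop :=
  X.Pairwise fun x y => Disjoint (interior (C + {x})) (interior (C + {y}))

/-- Mahler's lemma: if ±v₁, ±v₂, ±v₃ are the six vertices of an affinely regular hexagon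
inscribed in the centrally symmetric convex domain `C` (so `v₃ = v₂ - v₁` and all six
points lie on the boundary of `C`), then `C + Λ` is a lattice packing, where
`Λ = {2z₁v₁ + 2z₂v₂ : z₁, z₂ ∈ ℤ}`. -/
theorem mahler_packing (C : Set (ℝ × ℝ)) (hcpt : IsCompact C) (hconv : Convex ℝ C)
    (hint : (interior C).Nonempty) (hsymm : C = -C)
    (v₁ v₂ : ℝ × ℝ) (hli : LinearIndependent ℝ ![v₁, v₂])
    (h1 : v₁ ∈ frontier C) (h2 : v₂ ∈ frontier C) (h3 : v₂ - v₁ ∈ frontier C) :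
    IsPacking C {p : ℝ × ℝ | ∃ z₁ z₂ : ℤ, p = (2 * (z₁ : ℝ)) • v₁ + (2 * (z₂ : ℝ)) • v₂} := by
  classical
  -- interior C is symmetric
  have hnegC : -C = (-1 : ℝ) • C := by
    ext x; simp [Set.mem_smul_set, Set.mem_neg]
  have hIntNeg : ∀ x ∈ interior C, -x ∈ interior C := by
    intro x hx
    have : interior C = interior (-C) := by rw [← hsymm]
    rw [this, hnegC, interior_smul₀ (by norm_num : (-1:ℝ) ≠ 0)]
    exact ⟨x, hx, by simp⟩
  -- 0 ∈ interior C
  have h0 : (0 : ℝ × ℝ) ∈ interior C := by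
    obtain ⟨x, hx⟩ := hint
    have hx' : -x ∈ interior C := hIntNeg x hx
    have := hconv.interior hx hx' (by norm_num : (0:ℝ) ≤ 1/2)
      (by norm_num : (0:ℝ) ≤ 1/2) (by norm_num)
    simpa using this
  have hnhds : C ∈ nhds (0 : ℝ × ℝ) := mem_interior_iff_mem_nhds.1 h0
  have habs : Absorbent ℝ C := absorbent_nhds_zero hnhds
  have hsym : ∀ x ∈ C, -x ∈ C := by
    intro x hx
    rw [hsymm]; simpa [Set.mem_neg] using hx
  set g := gauge C with hg
  have gfr : ∀ x : ℝ × ℝ, x ∈ frontier C → g x = 1 := fun x hx =>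
    (gauge_eq_one_iff_mem_frontier hconv hnhds).2 hx
  have g1 : g v₁ = 1 := gfr _ h1
  have g2 : g v₂ = 1 := gfr _ h2
  have g3 : g (v₂ - v₁) = 1 := gfr _ h3
  have gneg : ∀ x : ℝ × ℝ, g (-x) = g x := fun x => gauge_neg hsym x
  have g3' : g (v₁ - v₂) = 1 := by rw [← gneg]; simpa using g3
  have gsmul : ∀ (r : ℝ), 0 ≤ r → ∀ x : ℝ × ℝ, g (r • x) = r * g x := by
    intro r hr x
    rw [hg, gauge_smul_of_nonneg hr, smul_eq_mul]
  have gadd : ∀ x y : ℝ × ℝ, g (x + y) ≤ g x + g y := gauge_add_le hconv habs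
  -- key: if g a = 1 and g (a - b) = 1, then for m, n ≥ 0, m ≤ g (m•a + n•b)
  have key : ∀ a b : ℝ × ℝ, g a = 1 → g (a - b) = 1 → ∀ m n : ℝ, 0 ≤ m → 0 ≤ n →
      m ≤ g (m • a + n • b) := by
    intro a b ha hab m n hm hn
    have h1' : (m + n) • a = (m • a + n • b) + n • (a - b) := by module
    have h2' : g ((m + n) • a) = m + n := by
      rw [gsmul _ (by linarith), ha, mul_one]
    have h3' : g (n • (a - b)) = n := by rw [gsmul _ hn, hab, mul_one]
    have := gadd (m • a + n • b) (n • (a - b))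
    rw [← h1', h2', h3'] at this
    linarith
  -- the main estimate for nonnegative first coordinate
  have main' : ∀ z₁ z₂ : ℤ, 0 ≤ z₁ → ¬(z₁ = 0 ∧ z₂ = 0) →
      1 ≤ g ((z₁ : ℝ) • v₁ + (z₂ : ℝ) • v₂) := by
    intro z₁ z₂ hz₁ hne
    rcases le_or_gt 0 z₂ with hz₂ | hz₂
    · -- both nonnegative
      rcases (by omega : 1 ≤ z₁ ∨ 1 ≤ z₂) with h | h
      · have := key v₁ v₂ g1 g3' (z₁ : ℝ) (z₂ : ℝ)
          (by exact_mod_cast hz₁) (by exact_mod_cast hz₂)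
        have h1z : (1 : ℝ) ≤ (z₁ : ℝ) := by exact_mod_cast h
        linarith
      · have := key v₂ v₁ g2 g3 (z₂ : ℝ) (z₁ : ℝ)
          (by exact_mod_cast hz₂) (by exact_mod_cast hz₁)
        have h1z : (1 : ℝ) ≤ (z₂ : ℝ) := by exact_mod_cast h
        rw [show (z₂:ℝ) • v₂ + (z₁:ℝ) • v₁ = (z₁:ℝ) • v₁ + (z₂:ℝ) • v₂ by module] at this
        linarith
    · -- z₂ < 0, i.e. z₂ ≤ -1
      rcases le_or_gt 0 (z₁ + z₂) with hs | hs
      · -- w = (-z₂)•(v₁ - v₂) + (z₁+z₂)•v₁ ; use g(v₁-v₂)=1, g((v₁-v₂)-v₁)=g(-v₂)=1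
        have hv : g ((v₁ - v₂) - v₁) = 1 := by
          rw [show (v₁ - v₂) - v₁ = -v₂ by module, gneg, g2]
        have := key (v₁ - v₂) v₁ g3' hv (-(z₂ : ℝ)) ((z₁ : ℝ) + (z₂ : ℝ))
          (by push_cast; linarith [show (z₂:ℝ) ≤ -1 by exact_mod_cast (by omega : z₂ ≤ -1)])
          (by exact_mod_cast hs)
        rw [show (-(z₂:ℝ)) • (v₁ - v₂) + ((z₁:ℝ) + (z₂:ℝ)) • v₁
            = (z₁:ℝ) • v₁ + (z₂:ℝ) • v₂ by module] at this
        have h1z : (1 : ℝ) ≤ -(z₂ : ℝ) := by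
          have : z₂ ≤ -1 := by omega
          have : (z₂ : ℝ) ≤ -1 := by exact_mod_cast this
          linarith
        linarith
      · -- z₁ + z₂ < 0 : w = (-(z₁+z₂))•(-v₂) + z₁•(v₁-v₂) ; g(-v₂)=1, g(-v₂-(v₁-v₂))=g(-v₁)=1
        have hnv₂ : g (-v₂) = 1 := by rw [gneg, g2]
        have hv : g ((-v₂) - (v₁ - v₂)) = 1 := by
          rw [show (-v₂) - (v₁ - v₂) = -v₁ by module, gneg, g1]
        have := key (-v₂) (v₁ - v₂) hnv₂ hv (-((z₁ : ℝ) + (z₂ : ℝ))) (z₁ : ℝ)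
          (by push_cast
              have : (z₁:ℝ) + (z₂:ℝ) < 0 := by exact_mod_cast hs
              linarith)
          (by exact_mod_cast hz₁)
        rw [show (-((z₁:ℝ) + (z₂:ℝ))) • (-v₂) + (z₁:ℝ) • (v₁ - v₂)
            = (z₁:ℝ) • v₁ + (z₂:ℝ) • v₂ by module] at this
        have h1z : (1 : ℝ) ≤ -((z₁ : ℝ) + (z₂ : ℝ)) := by
          have : z₁ + z₂ ≤ -1 := by omega
          have : ((z₁ + z₂ : ℤ) : ℝ) ≤ -1 := by exact_mod_cast this
          push_cast at this
          linarith
        linarith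
  have main : ∀ z₁ z₂ : ℤ, ¬(z₁ = 0 ∧ z₂ = 0) →
      1 ≤ g ((z₁ : ℝ) • v₁ + (z₂ : ℝ) • v₂) := by
    intro z₁ z₂ hne
    rcases le_or_gt 0 z₁ with h | h
    · exact main' z₁ z₂ h hne
    · have := main' (-z₁) (-z₂) (by omega) (by omega)
      rw [show ((-z₁ : ℤ) : ℝ) • v₁ + ((-z₂ : ℤ) : ℝ) • v₂
          = -((z₁:ℝ) • v₁ + (z₂:ℝ) • v₂) by push_cast; module, gneg] at this
      exact this
  -- now the packing argument
  intro p hp q hq hne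
  obtain ⟨z₁, z₂, rfl⟩ := hp
  obtain ⟨w₁, w₂, rfl⟩ := hq
  rw [Set.disjoint_left]
  intro a ha hb
  have hPQ : ∀ x : ℝ × ℝ, interior (C + {x}) = (· + x) '' interior C := by
    intro x
    rw [Set.add_singleton, ← Homeomorph.coe_addRight x]
    exact ((Homeomorph.addRight x).image_interior C).symm
  rw [hPQ] at ha hb
  obtain ⟨c, hc, hca⟩ := ha
  obtain ⟨d, hd, hda⟩ := hb
  set p := (2 * (z₁ : ℝ)) • v₁ + (2 * (z₂ : ℝ)) • v₂ with hpdef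
  set q := (2 * (w₁ : ℝ)) • v₁ + (2 * (w₂ : ℝ)) • v₂ with hqdef
  have h' : c + p = d + q := by
    have h₁ : c + p = a := hca
    have h₂ : d + q = a := hda
    rw [h₁, h₂]
  have hdc : p - q = d - c := by
    have h1 : p = d + q - c := by rw [← h']; abel
    rw [h1]; abel
  have hmid : (1/2 : ℝ) • d + (1/2 : ℝ) • (-c) ∈ interior C :=
    hconv.interior hd (hIntNeg c hc) (by norm_num) (by norm_num) (by norm_num)
  have hmid' : ((z₁ - w₁ : ℤ) : ℝ) • v₁ + ((z₂ - w₂ : ℤ) : ℝ) • v₂ ∈ interior C := by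
    have heq : ((z₁ - w₁ : ℤ) : ℝ) • v₁ + ((z₂ - w₂ : ℤ) : ℝ) • v₂
        = (1/2 : ℝ) • d + (1/2 : ℝ) • (-c) := by
      have h2' : (1/2 : ℝ) • d + (1/2 : ℝ) • (-c) = (1/2 : ℝ) • (d - c) := by module
      rw [h2', ← hdc, hpdef, hqdef]
      push_cast
      module
    rw [heq]; exact hmid
  have hlt : g (((z₁ - w₁ : ℤ) : ℝ) • v₁ + ((z₂ - w₂ : ℤ) : ℝ) • v₂) < 1 :=
    (gauge_lt_one_iff_mem_interior hconv hnhds).2 hmid'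
  have hnz : ¬(z₁ - w₁ = 0 ∧ z₂ - w₂ = 0) := by
    rintro ⟨h₁, h₂⟩
    apply hne
    rw [hpdef, hqdef]
    have e1 : z₁ = w₁ := by omega
    have e2 : z₂ = w₂ := by omega
    rw [e1, e2]
  have := main (z₁ - w₁) (z₂ - w₂) hnz
  linarith

end
end

section
/- Let C be a two-dimensional centrally symmetric convex domain, and let v₁v₂...v₆ be an affinely regular hexagon inscribed in C with vertices v₁, v₂, v₃, v₄=-v₁, v₅=-v₂, v₆=-v₃ on ∂C. For i = 1,2,3, let mᵢ = (vᵢ + vᵢ₊₁)/2 and let fᵢ be the ratio ‖mᵢ*‖/‖mᵢ‖, where mᵢ* is the boundary point of C on the ray from the origin through mᵢ. Then γ*(C) ≤ max{f₁, f₂, f₃}. -/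
open Pointwise Set

noncomputable section

def IsCovering (D X : Set (ℝ × ℝ)) : Prop :=
  ⋃ x ∈ X, (D + {x}) = Set.univ

def IsLattice2 (Λ : Set (ℝ × ℝ)) : Prop :=
  ∃ v w : ℝ × ℝ, LinearIndependent ℝ ![v, w] ∧
    Λ = {p | ∃ z₁ z₂ : ℤ, p = (z₁ : ℝ) • v + (z₂ : ℝ) • w}

/-- γ*(C): the smallest `r > 0` for which some lattice `Λ` makes `C + Λ` a packing
and `rC + Λ` a covering of the plane. -/
def gammaStar (C : Set (ℝ × ℝ)) : ℝ :=
  sInf {r : ℝ | 0 < r ∧ ∃ Λ : Set (ℝ × ℝ),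
    IsLattice2 Λ ∧ IsPacking C Λ ∧ IsCovering (r • C) Λ}

lemma hexfit (u v : ℝ) : ∃ z₁ z₂ : ℤ,
    |u - z₁ + z₂| ≤ 1 ∧ |v - z₁ - 2*z₂| ≤ 1 ∧
    |(u - z₁ + z₂) + (v - z₁ - 2*z₂)| ≤ 1 := by
  obtain ⟨n₂, hρ1, hρ2⟩ : ∃ n₂ : ℤ, -(3/2) ≤ v - u - 3*n₂ ∧ v - u - 3*n₂ ≤ 3/2 := by
    refine ⟨round ((v-u)/3), ?_, ?_⟩ <;>
      · have h := abs_sub_round ((v-u)/3); rw [abs_le] at h; obtain ⟨ha, hb⟩ := h; linarith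
  obtain ⟨n₁, hε1, hε2⟩ : ∃ n₁ : ℤ, -(1/2) ≤ u + n₂ - n₁ ∧ u + n₂ - n₁ ≤ 1/2 := by
    refine ⟨round (u + (n₂:ℝ)), ?_, ?_⟩ <;>
      · have h := abs_sub_round (u + (n₂:ℝ)); rw [abs_le] at h; obtain ⟨ha, hb⟩ := h; linarith
  by_cases hB : 1 < (u + n₂ - n₁) + (v - u - 3*n₂) ∨ 1 < 2*(u + n₂ - n₁) + (v - u - 3*n₂)
  · by_cases hε : 0 ≤ u + n₂ - n₁
    · have k1 : 1 ≤ 2*(u + n₂ - n₁) + (v - u - 3*n₂) := by rcases hB with h|h <;> linarith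
      have k2 : 0 ≤ (u + n₂ - n₁) + (v - u - 3*n₂) := by rcases hB with h|h <;> linarith
      refine ⟨n₁ + 1, n₂, ?_, ?_, ?_⟩ <;> (rw [abs_le]; push_cast; constructor <;> linarith)
    · push_neg at hε
      have k1 : 1 < v - u - 3*n₂ := by rcases hB with h|h <;> linarith
      have k2 : 1 ≤ (u + n₂ - n₁) + (v - u - 3*n₂) := by rcases hB with h|h <;> linarith
      refine ⟨n₁, n₂ + 1, ?_, ?_, ?_⟩ <;> (rw [abs_le]; push_cast; constructor <;> linarith)
  · push_neg at hB
    obtain ⟨hB1, hB2⟩ := hB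
    by_cases hC : (u + n₂ - n₁) + (v - u - 3*n₂) < -1 ∨ 2*(u + n₂ - n₁) + (v - u - 3*n₂) < -1
    · by_cases hε : u + n₂ - n₁ ≤ 0
      · have k1 : 2*(u + n₂ - n₁) + (v - u - 3*n₂) ≤ -1 := by rcases hC with h|h <;> linarith
        have k2 : (u + n₂ - n₁) + (v - u - 3*n₂) ≤ 0 := by rcases hC with h|h <;> linarith
        refine ⟨n₁ - 1, n₂, ?_, ?_, ?_⟩ <;> (rw [abs_le]; push_cast; constructor <;> linarith)
      · push_neg at hε
        have k1 : v - u - 3*n₂ < -1 := by rcases hC with h|h <;> linarith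
        have k2 : (u + n₂ - n₁) + (v - u - 3*n₂) ≤ -1 := by rcases hC with h|h <;> linarith
        refine ⟨n₁, n₂ - 1, ?_, ?_, ?_⟩ <;> (rw [abs_le]; push_cast; constructor <;> linarith)
    · push_neg at hC
      obtain ⟨hC1, hC2⟩ := hC
      refine ⟨n₁, n₂, ?_, ?_, ?_⟩ <;> (rw [abs_le]; constructor <;> linarith)

lemma interior_neg' (s : Set (ℝ × ℝ)) : interior (-s) = -interior s := by
  have h := (Homeomorph.neg (ℝ × ℝ)).image_interior s
  rw [show (⇑(Homeomorph.neg (ℝ × ℝ)) '' s) = -s by ext x; simp [Set.mem_neg],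
      show (⇑(Homeomorph.neg (ℝ × ℝ)) '' interior s) = -interior s by
        ext x; simp [Set.mem_neg]] at h
  exact h.symm

/-- Zong's lemma: for an affinely regular hexagon `v₁…v₆` inscribed in `C` (with
`v₃ = v₂ - v₁`, `v₄ = -v₁`, …), if `mᵢ` is the midpoint of `vᵢvᵢ₊₁` and `mᵢ* = tᵢ • mᵢ`
is the boundary point of `C` on the ray from the origin through `mᵢ`, then
`γ*(C) ≤ max {t₁, t₂, t₃}`. -/
theorem gammaStar_le_max (C : Set (ℝ × ℝ)) (hcpt : IsCompact C) (hconv : Convex ℝ C)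
    (hint : (interior C).Nonempty) (hsymm : C = -C)
    (v₁ v₂ : ℝ × ℝ) (hli : LinearIndependent ℝ ![v₁, v₂])
    (h1 : v₁ ∈ frontier C) (h2 : v₂ ∈ frontier C) (h3 : v₂ - v₁ ∈ frontier C)
    (t₁ t₂ t₃ : ℝ) (ht₁ : 1 ≤ t₁) (ht₂ : 1 ≤ t₂) (ht₃ : 1 ≤ t₃)
    (hm1 : t₁ • ((2⁻¹ : ℝ) • (v₁ + v₂)) ∈ frontier C)
    (hm2 : t₂ • ((2⁻¹ : ℝ) • (v₂ + (v₂ - v₁))) ∈ frontier C)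
    (hm3 : t₃ • ((2⁻¹ : ℝ) • ((v₂ - v₁) + -v₁)) ∈ frontier C) :
    gammaStar C ≤ max t₁ (max t₂ t₃) := by
  classical
  set μ₁ : ℝ × ℝ := (2⁻¹ : ℝ) • (v₁ + v₂) with hμ₁def
  set μ₂ : ℝ × ℝ := (2⁻¹ : ℝ) • (v₂ + (v₂ - v₁)) with hμ₂def
  set μ₃ : ℝ × ℝ := (2⁻¹ : ℝ) • ((v₂ - v₁) + -v₁) with hμ₃def
  set r := max t₁ (max t₂ t₃) with hrdef
  have hrt₁ : t₁ ≤ r := le_max_left _ _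
  have hrt₂ : t₂ ≤ r := le_max_of_le_right (le_max_left _ _)
  have hrt₃ : t₃ ≤ r := le_max_of_le_right (le_max_right _ _)
  have hr1 : (1:ℝ) ≤ r := le_trans ht₁ hrt₁
  have hr0 : (0:ℝ) < r := lt_of_lt_of_le one_pos hr1
  have hrne : r ≠ 0 := ne_of_gt hr0
  have ht₁0 : t₁ ≠ 0 := by linarith
  have ht₂0 : t₂ ≠ 0 := by linarith
  have ht₃0 : t₃ ≠ 0 := by linarith
  have hCclosed : IsClosed C := hcpt.isClosed
  have hfr : ∀ {x : ℝ × ℝ}, x ∈ frontier C → x ∈ C := fun hx =>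
    hCclosed.closure_eq ▸ hx.1
  have negC : ∀ {x : ℝ × ℝ}, x ∈ C → -x ∈ C := by
    intro x hx; rw [hsymm]; exact Set.neg_mem_neg.2 hx
  have intNegMem : ∀ {x : ℝ × ℝ}, x ∈ interior C → -x ∈ interior C := by
    intro x hx
    have h : -x ∈ interior (-C) := by rw [interior_neg']; exact Set.neg_mem_neg.2 hx
    rwa [← hsymm] at h
  have negInt : ∀ {p : ℝ × ℝ}, p ∉ interior C → -p ∉ interior C := by
    intro p hp h
    exact hp (by simpa using intNegMem h)
  have h0int : (0 : ℝ × ℝ) ∈ interior C := by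
    obtain ⟨x, hx⟩ := hint
    have hx' : -x ∈ interior C := intNegMem hx
    have h := (hconv.interior) hx hx' (by norm_num) (by norm_num)
      (by norm_num : (2⁻¹:ℝ) + 2⁻¹ = 1)
    simpa using h
  have h0C : (0 : ℝ × ℝ) ∈ C := interior_subset h0int
  have h1C : v₁ ∈ C := hfr h1
  have h2C : v₂ ∈ C := hfr h2
  have h3C : v₂ - v₁ ∈ C := hfr h3
  have h1C' : -v₁ ∈ C := negC h1C
  have h2C' : -v₂ ∈ C := negC h2C
  have h31C : v₁ - v₂ ∈ C := by have := negC h3C; simpa using this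
  -- scaling lemma
  have scaleS : ∀ (p : ℝ × ℝ), p ∉ interior C → ∀ s : ℝ, 1 ≤ s → s • p ∉ interior C := by
    intro p hp s hs hsp
    apply hp
    have hs0 : (0:ℝ) < s := lt_of_lt_of_le one_pos hs
    have h1' : (0:ℝ) < s⁻¹ := inv_pos.2 hs0
    have h2' : s⁻¹ ≤ 1 := by
      rw [inv_le_one_iff₀]; right; exact hs
    have key := hconv.combo_interior_closure_mem_interior (a := s⁻¹) (b := 1 - s⁻¹) hsp
      (by rw [hCclosed.closure_eq]; exact h0C) h1' (by linarith) (by ring)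
    simpa [smul_smul, inv_mul_cancel₀ (ne_of_gt hs0)] using key
  -- ray lemma
  have rayR : ∀ (p q τ : ℝ × ℝ) (σ : ℝ), q ∈ C → τ ∉ interior C → 0 < σ → σ ≤ 1 →
      τ = σ • p + (1-σ) • q → p ∉ interior C := by
    intro p q τ σ hq hτ hσ0 hσ1 heq hp
    exact hτ (heq ▸ hconv.combo_interior_closure_mem_interior hp
      (by rw [hCclosed.closure_eq]; exact hq) hσ0 (by linarith) (by ring))
    -- core claim, "positive half"
  have keyHalf : ∀ k₁ k₂ : ℤ, (1 ≤ k₁ ∨ (k₁ = 0 ∧ 1 ≤ k₂)) →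
      r • ((k₁:ℝ) • μ₁ + (k₂:ℝ) • μ₂) ∉ interior C := by
    intro k₁ k₂ hk
    rcases hk with hk₁ | ⟨rfl, hk₂⟩
    · -- 1 ≤ k₁
      have hk₁R : (1:ℝ) ≤ (k₁:ℝ) := by exact_mod_cast hk₁
      rcases eq_or_ne k₂ 0 with rfl | hk₂0
      · -- k₂ = 0 : multiple of μ₁
        have hs : (1:ℝ) ≤ r * k₁ / t₁ := by
          rw [le_div_iff₀ (by linarith : (0:ℝ) < t₁)]
          nlinarith
        have hres := scaleS _ hm1.2 _ hs
        have e : r • ((k₁:ℝ) • μ₁ + ((0:ℤ):ℝ) • μ₂) = (r * k₁ / t₁) • (t₁ • μ₁) := by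
          simp only [hμ₁def, hμ₂def]
          push_cast
          match_scalars <;> (field_simp; try ring)
        rw [e]; exact hres
      · rcases eq_or_ne (k₁ + k₂) 0 with hk12 | hk12
        · -- k₂ = -k₁ : multiple of μ₃
          have hk₂eq : (k₂:ℝ) = -(k₁:ℝ) := by
            have : k₂ = -k₁ := by omega
            rw [this]; push_cast; ring
          have hs : (1:ℝ) ≤ r * k₁ / t₃ := by
            rw [le_div_iff₀ (by linarith : (0:ℝ) < t₃)]
            nlinarith
          have hres := scaleS _ (negInt hm3.2) _ hs
          have e : r • ((k₁:ℝ) • μ₁ + (k₂:ℝ) • μ₂) = (r * k₁ / t₃) • (-(t₃ • μ₃)) := by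
            rw [hk₂eq]
            simp only [hμ₁def, hμ₂def, hμ₃def]
            match_scalars <;> (field_simp; try ring)
          rw [e]; exact hres
        · -- generic case
          set A : ℝ := ((k₁:ℝ) - (k₂:ℝ))/2 with hAdef
          set B : ℝ := ((k₁:ℝ) + 2*(k₂:ℝ))/2 with hBdef
          have hp₀ : (k₁:ℝ) • μ₁ + (k₂:ℝ) • μ₂ = A • v₁ + B • v₂ := by
            simp only [hμ₁def, hμ₂def, hAdef, hBdef]
            module
          have hnot : A • v₁ + B • v₂ ∉ interior C := by
            rcases lt_or_ge 0 k₂ with hk₂pos | hk₂neg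
            · -- k₂ ≥ 1
              have hk₂R : (1:ℝ) ≤ (k₂:ℝ) := by exact_mod_cast hk₂pos
              rcases le_or_gt 0 A with hA | hA
              · -- pivot -v₁, target (B/(A+1)) • v₂
                have hA1 : (0:ℝ) < A + 1 := by linarith
                have hsge : (1:ℝ) ≤ B/(A+1) := by
                  rw [le_div_iff₀ hA1]; linarith
                refine rayR _ (-v₁) ((B/(A+1)) • v₂) (1/(A+1)) h1C'
                  (scaleS _ h2.2 _ hsge) (by positivity)
                  (by rw [div_le_one hA1]; linarith) ?_
                have : A + 1 ≠ 0 := ne_of_gt hA1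
                match_scalars <;> field_simp <;> ring
              · -- pivot v₁, target (B/(1-A)) • v₂
                have hA1 : (0:ℝ) < 1 - A := by linarith
                have hsge : (1:ℝ) ≤ B/(1-A) := by
                  rw [le_div_iff₀ hA1]; linarith
                refine rayR _ v₁ ((B/(1-A)) • v₂) (1/(1-A)) h1C
                  (scaleS _ h2.2 _ hsge) (by positivity)
                  (by rw [div_le_one hA1]; linarith) ?_
                have : (1:ℝ) - A ≠ 0 := ne_of_gt hA1
                match_scalars <;> field_simp <;> ring
            · -- k₂ ≤ -1
              have hk₂R : (k₂:ℝ) ≤ -1 := by exact_mod_cast (by omega : k₂ ≤ -1)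
              rcases lt_or_ge 0 (k₁ + k₂) with h12pos | h12neg
              · -- k₁ + k₂ ≥ 1
                have h12R : (1:ℝ) ≤ (k₁:ℝ) + (k₂:ℝ) := by exact_mod_cast (by omega : 1 ≤ k₁ + k₂)
                rcases le_or_gt 0 B with hB | hB
                · -- pivot -v₂, target (A/(B+1)) • v₁
                  have hB1 : (0:ℝ) < B + 1 := by linarith
                  have hsge : (1:ℝ) ≤ A/(B+1) := by
                    rw [le_div_iff₀ hB1]; linarith
                  refine rayR _ (-v₂) ((A/(B+1)) • v₁) (1/(B+1)) h2C'
                    (scaleS _ h1.2 _ hsge) (by positivity)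
                    (by rw [div_le_one hB1]; linarith) ?_
                  have : B + 1 ≠ 0 := ne_of_gt hB1
                  match_scalars <;> field_simp <;> ring
                · -- pivot v₂, target (A/(1-B)) • v₁
                  have hB1 : (0:ℝ) < 1 - B := by linarith
                  have hsge : (1:ℝ) ≤ A/(1-B) := by
                    rw [le_div_iff₀ hB1]; linarith
                  refine rayR _ v₂ ((A/(1-B)) • v₁) (1/(1-B)) h2C
                    (scaleS _ h1.2 _ hsge) (by positivity)
                    (by rw [div_le_one hB1]; linarith) ?_
                  have : (1:ℝ) - B ≠ 0 := ne_of_gt hB1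
                  match_scalars <;> field_simp <;> ring
              · -- k₁ + k₂ ≤ -1
                have h12R : (k₁:ℝ) + (k₂:ℝ) ≤ -1 := by exact_mod_cast (by omega : k₁ + k₂ ≤ -1)
                have hnotv12 : v₁ - v₂ ∉ interior C := by
                  have := negInt h3.2; simpa using this
                rcases le_or_gt 0 (A + B) with hABs | hABs
                · -- pivot -v₁, target (-B/(A+B+1)) • (v₁ - v₂)
                  have hD : (0:ℝ) < A + B + 1 := by linarith
                  have hsge : (1:ℝ) ≤ -B/(A+B+1) := by
                    rw [le_div_iff₀ hD]; linarith
                  refine rayR _ (-v₁) ((-B/(A+B+1)) • (v₁ - v₂)) (1/(A+B+1)) h1C'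
                    (scaleS _ hnotv12 _ hsge) (by positivity)
                    (by rw [div_le_one hD]; linarith) ?_
                  have : A + B + 1 ≠ 0 := ne_of_gt hD
                  match_scalars <;> field_simp <;> ring
                · -- pivot v₁, target (-B/(1-A-B)) • (v₁ - v₂)
                  have hD : (0:ℝ) < 1 - A - B := by linarith
                  have hsge : (1:ℝ) ≤ -B/(1-A-B) := by
                    rw [le_div_iff₀ hD]; linarith
                  refine rayR _ v₁ ((-B/(1-A-B)) • (v₁ - v₂)) (1/(1-A-B)) h1C
                    (scaleS _ hnotv12 _ hsge) (by positivity)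
                    (by rw [div_le_one hD]; linarith) ?_
                  have : (1:ℝ) - A - B ≠ 0 := ne_of_gt hD
                  match_scalars <;> field_simp <;> ring
          rw [hp₀]
          exact scaleS _ hnot r hr1
    · -- k₁ = 0, 1 ≤ k₂
      have hk₂R : (1:ℝ) ≤ (k₂:ℝ) := by exact_mod_cast hk₂
      have hs : (1:ℝ) ≤ r * k₂ / t₂ := by
        rw [le_div_iff₀ (by linarith : (0:ℝ) < t₂)]
        nlinarith
      have hres := scaleS _ hm2.2 _ hs
      have e : r • (((0:ℤ):ℝ) • μ₁ + (k₂:ℝ) • μ₂) = (r * k₂ / t₂) • (t₂ • μ₂) := by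
        simp only [hμ₁def, hμ₂def]
        push_cast
        match_scalars <;> (field_simp; try ring)
      rw [e]; exact hres
  -- full claim
  have keyP : ∀ k₁ k₂ : ℤ, ¬(k₁ = 0 ∧ k₂ = 0) →
      r • ((k₁:ℝ) • μ₁ + (k₂:ℝ) • μ₂) ∉ interior C := by
    intro k₁ k₂ hk
    rcases le_or_gt 1 k₁ with h | h
    · exact keyHalf k₁ k₂ (Or.inl h)
    · rcases eq_or_lt_of_le (by omega : k₁ ≤ 0) with hk₁0 | hk₁neg
      · rcases le_or_gt 1 k₂ with h2 | h2
        · exact keyHalf k₁ k₂ (Or.inr ⟨hk₁0, h2⟩)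
        · -- k₁ = 0, k₂ ≤ -1 : negate
          have hres := keyHalf (-k₁) (-k₂) (Or.inr ⟨by omega, by omega⟩)
          have e : r • ((k₁:ℝ) • μ₁ + (k₂:ℝ) • μ₂)
              = -(r • (((-k₁:ℤ):ℝ) • μ₁ + ((-k₂:ℤ):ℝ) • μ₂)) := by
            push_cast; module
          rw [e]; exact negInt hres
      · have hres := keyHalf (-k₁) (-k₂) (Or.inl (by omega))
        have e : r • ((k₁:ℝ) • μ₁ + (k₂:ℝ) • μ₂)
            = -(r • (((-k₁:ℤ):ℝ) • μ₁ + ((-k₂:ℤ):ℝ) • μ₂)) := by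
          push_cast; module
        rw [e]; exact negInt hres
    -- two-point convex combination with slack
  have combo2 : ∀ (w₁ w₂ : ℝ) (p₁ p₂ : ℝ × ℝ), p₁ ∈ C → p₂ ∈ C → 0 ≤ w₁ → 0 ≤ w₂ →
      w₁ + w₂ ≤ 1 → w₁ • p₁ + w₂ • p₂ ∈ C := by
    intro w₁ w₂ p₁ p₂ hp₁ hp₂ hw₁ hw₂ hw
    have h := hconv.sum_mem (t := (Finset.univ : Finset (Fin 3)))
        (w := ![w₁, w₂, 1 - w₁ - w₂]) (z := ![p₁, p₂, 0]) ?_ ?_ ?_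
    · simpa [Fin.sum_univ_three] using h
    · intro i _; fin_cases i <;> simp <;> linarith
    · rw [Fin.sum_univ_three]; simp
    · intro i _; fin_cases i <;> simp [hp₁, hp₂, h0C]
  -- the hexagon is contained in C
  have hexCpos : ∀ α β : ℝ, 0 ≤ α → |α| ≤ 1 → |β| ≤ 1 → |α+β| ≤ 1 →
      α • v₁ + β • v₂ ∈ C := by
    intro α β hα h1' h2' h3'
    rw [abs_le] at h1' h2' h3'
    rcases le_or_gt 0 β with hβ | hβ
    · exact combo2 α β v₁ v₂ h1C h2C hα hβ (by linarith [h3'.2])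
    · rcases le_or_gt 0 (α + β) with hs | hs
      · have h := combo2 (α+β) (-β) v₁ (v₁ - v₂) h1C h31C hs (by linarith) (by linarith [h1'.2])
        have e : (α+β) • v₁ + (-β) • (v₁ - v₂) = α • v₁ + β • v₂ := by module
        rw [← e]; exact h
      · have h := combo2 (-(α+β)) α (-v₂) (v₁ - v₂) h2C' h31C (by linarith) hα (by linarith [h2'.1])
        have e : (-(α+β)) • (-v₂) + α • (v₁ - v₂) = α • v₁ + β • v₂ := by module
        rw [← e]; exact h
  have hexC : ∀ α β : ℝ, |α| ≤ 1 → |β| ≤ 1 → |α+β| ≤ 1 → α • v₁ + β • v₂ ∈ C := by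
    intro α β h1' h2' h3'
    rcases le_or_gt 0 α with hα | hα
    · exact hexCpos α β hα h1' h2' h3'
    · have h := hexCpos (-α) (-β) (by linarith) (by rwa [abs_neg]) (by rwa [abs_neg])
        (by rw [show -α + -β = -(α+β) by ring, abs_neg]; exact h3')
      have h' := negC h
      have e : -((-α) • v₁ + (-β) • v₂) = α • v₁ + β • v₂ := by module
      rw [← e]; exact h'
  -- the lattice
  set V : ℝ × ℝ := (2*r) • μ₁ with hVdef
  set W : ℝ × ℝ := (2*r) • μ₂ with hWdef
  set Λ : Set (ℝ × ℝ) := {p | ∃ z₁ z₂ : ℤ, p = (z₁ : ℝ) • V + (z₂ : ℝ) • W} with hΛdef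
  have hli' := LinearIndependent.pair_iff.1 hli
  have hVWli : LinearIndependent ℝ ![V, W] := by
    rw [LinearIndependent.pair_iff]
    intro s t hst
    have h2' : (s*r - t*r) • v₁ + (s*r + 2*(t*r)) • v₂ = 0 := by
      simp only [hVdef, hWdef, hμ₁def, hμ₂def] at hst
      linear_combination (norm := module) hst
    obtain ⟨e₁, e₂⟩ := hli' _ _ h2'
    have htr : t * r = 0 := by linarith
    have ht0 : t = 0 := by
      rcases mul_eq_zero.1 htr with h | h
      · exact h
      · exact absurd h hrne
    have hsr : s * r = 0 := by linarith
    have hs0 : s = 0 := by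
      rcases mul_eq_zero.1 hsr with h | h
      · exact h
      · exact absurd h hrne
    exact ⟨hs0, ht0⟩
  -- translation of interiors
  have transInt : ∀ (x p : ℝ × ℝ), p ∈ interior (C + {x}) → p - x ∈ interior C := by
    intro x p hp
    have hset : C + {x} = (Homeomorph.addRight x) '' C := by
      ext y; simp [Set.add_singleton]
    rw [hset, ← Homeomorph.image_interior] at hp
    obtain ⟨c, hc, hcx⟩ := hp
    have hcx' : c + x = p := hcx
    rw [show p - x = c from by rw [← hcx']; abel]
    exact hc
  -- packing
  have hpack : IsPacking C Λ := by
    intro x hx y hy hxy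
    obtain ⟨z₁, z₂, rfl⟩ := hx
    obtain ⟨w₁, w₂, rfl⟩ := hy
    rw [Set.disjoint_left]
    intro p hp hq
    have hpx := transInt _ _ hp
    have hpy := transInt _ _ hq
    have hmid : (2⁻¹:ℝ) • (p - ((w₁:ℝ) • V + (w₂:ℝ) • W)) +
        (2⁻¹:ℝ) • (-(p - ((z₁:ℝ) • V + (z₂:ℝ) • W))) ∈ interior C :=
      hconv.interior hpy (intNegMem hpx) (by norm_num) (by norm_num) (by norm_num)
    have e : (2⁻¹:ℝ) • (p - ((w₁:ℝ) • V + (w₂:ℝ) • W)) +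
        (2⁻¹:ℝ) • (-(p - ((z₁:ℝ) • V + (z₂:ℝ) • W)))
        = r • (((z₁ - w₁ : ℤ):ℝ) • μ₁ + ((z₂ - w₂ : ℤ):ℝ) • μ₂) := by
      simp only [hVdef, hWdef]
      push_cast
      module
    rw [e] at hmid
    have hkne : ¬(z₁ - w₁ = 0 ∧ z₂ - w₂ = 0) := by
      rintro ⟨ha, hb⟩
      apply hxy
      obtain rfl : z₁ = w₁ := by omega
      obtain rfl : z₂ = w₂ := by omega
      rfl
    exact keyP _ _ hkne hmid
  -- coordinates
  have hcard : Fintype.card (Fin 2) = Module.finrank ℝ (ℝ × ℝ) := by simp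
  let Bas := basisOfLinearIndependentOfCardEqFinrank hli hcard
  have hBas : ∀ x : ℝ × ℝ, x = (Bas.repr x 0) • v₁ + (Bas.repr x 1) • v₂ := by
    intro x
    have h := Bas.sum_repr x
    rw [Fin.sum_univ_two] at h
    have e0 : Bas 0 = v₁ := by
      simp [Bas, coe_basisOfLinearIndependentOfCardEqFinrank]
    have e1 : Bas 1 = v₂ := by
      simp [Bas, coe_basisOfLinearIndependentOfCardEqFinrank]
    rw [e0, e1] at h
    exact h.symm
  -- covering
  have hcov : IsCovering (r • C) Λ := by
    apply Set.eq_univ_of_forall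
    intro x
    set a := Bas.repr x 0 with hadef
    set b := Bas.repr x 1 with hbdef
    have hx : x = a • v₁ + b • v₂ := hBas x
    obtain ⟨z₁, z₂, hh1, hh2, hh3⟩ := hexfit (a/r) (b/r)
    have hmem : (x - ((z₁:ℝ) • V + (z₂:ℝ) • W)) ∈ r • C := by
      refine Set.mem_smul_set.2 ⟨(a/r - z₁ + z₂) • v₁ + (b/r - z₁ - 2*z₂) • v₂,
        hexC _ _ hh1 hh2 hh3, ?_⟩
      rw [hx]
      simp only [hVdef, hWdef, hμ₁def, hμ₂def]
      match_scalars <;> (field_simp; try ring)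
    refine Set.mem_biUnion (show ((z₁:ℝ) • V + (z₂:ℝ) • W) ∈ Λ from ⟨z₁, z₂, rfl⟩) ?_
    exact Set.mem_add.2 ⟨_, hmem, _, Set.mem_singleton _, by abel⟩
  -- conclusion
  have hrmem : r ∈ {s : ℝ | 0 < s ∧ ∃ Λ' : Set (ℝ × ℝ),
      IsLattice2 Λ' ∧ IsPacking C Λ' ∧ IsCovering (s • C) Λ'} :=
    ⟨hr0, Λ, ⟨V, W, hVWli, hΛdef⟩, hpack, hcov⟩
  unfold gammaStar
  exact csInf_le ⟨0, fun s hs => le_of_lt hs.1⟩ hrmem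
end
end

section
/- For every two-dimensional centrally symmetric convex domain C, the ratio of the optimal lattice covering density to the optimal lattice packing density satisfies θ*(C)/δ*(C) ≤ 8(3−2√2). -/
open Pointwise Set Topology

noncomputable section

open MeasureTheory

/-- The lattice spanned by `v` and `w` over the integers. -/
def latticeOf (v w : ℝ × ℝ) : Set (ℝ × ℝ) :=
  {p | ∃ z₁ z₂ : ℤ, p = (z₁ : ℝ) • v + (z₂ : ℝ) • w}

/-- The determinant (covolume) of the lattice spanned by `v` and `w`. -/
def latDet (v w : ℝ × ℝ) : ℝ := |v.1 * w.2 - v.2 * w.1|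

/-- δ*(C): the optimal lattice packing density of `C`. -/
def deltaStar (C : Set (ℝ × ℝ)) : ℝ :=
  sSup {d : ℝ | ∃ v w : ℝ × ℝ, LinearIndependent ℝ ![v, w] ∧
    IsPacking C (latticeOf v w) ∧ d = (volume C).toReal / latDet v w}

/-- θ*(C): the optimal lattice covering density of `C`. -/
def thetaStar (C : Set (ℝ × ℝ)) : ℝ :=
  sInf {d : ℝ | ∃ v w : ℝ × ℝ, LinearIndependent ℝ ![v, w] ∧
    IsCovering C (latticeOf v w) ∧ d = (volume C).toReal / latDet v w}

namespace ZongAux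

lemma symm_mem {C : Set (ℝ × ℝ)} (hsymm : C = -C) {x : ℝ × ℝ} (hx : x ∈ C) : -x ∈ C := by
  rw [hsymm]; exact Set.neg_mem_neg.2 hx

lemma zero_mem_int {C : Set (ℝ × ℝ)} (hconv : Convex ℝ C) (hint : (interior C).Nonempty)
    (hsymm : C = -C) : (0 : ℝ × ℝ) ∈ interior C := by
  obtain ⟨y, hy⟩ := hint
  have hy' : -y ∈ interior C := by
    rw [hsymm]
    exact mem_interior.2 ⟨-interior C, Set.neg_subset_neg.2 interior_subset,
      isOpen_interior.neg, Set.neg_mem_neg.2 hy⟩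
  have h := hconv.interior hy hy' (by norm_num : (0:ℝ) ≤ 1/2) (by norm_num : (0:ℝ) ≤ 1/2)
    (by norm_num)
  have h2 : ((1:ℝ)/2) • y + ((1:ℝ)/2) • (-y) = 0 := by module
  rwa [h2] at h

variable {C : Set (ℝ × ℝ)}

lemma gauge_abs_smul (hsymm : C = -C) (t : ℝ) (x : ℝ × ℝ) :
    gauge C (t • x) = |t| * gauge C x := by
  rcases le_or_gt 0 t with ht | ht
  · rw [gauge_smul_of_nonneg ht, abs_of_nonneg ht, smul_eq_mul]
  · have h1 : t • x = -((-t) • x) := by module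
    rw [h1, gauge_neg (fun y hy => symm_mem hsymm hy), gauge_smul_of_nonneg (by linarith),
      abs_of_neg ht, smul_eq_mul]

lemma gauge_combo (hconv : Convex ℝ C) (h0 : (0:ℝ×ℝ) ∈ interior C)
    {r s : ℝ} (hr : 0 ≤ r) (hs : 0 ≤ s) (x y : ℝ × ℝ) :
    gauge C (r • x + s • y) ≤ r * gauge C x + s * gauge C y := by
  have habs : Absorbent ℝ C := absorbent_nhds_zero (mem_interior_iff_mem_nhds.1 h0)
  calc gauge C (r • x + s • y) ≤ gauge C (r • x) + gauge C (s • y) := gauge_add_le hconv habs _ _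
  _ = r * gauge C x + s * gauge C y := by
      rw [gauge_smul_of_nonneg hr, gauge_smul_of_nonneg hs, smul_eq_mul, smul_eq_mul]

lemma mem_of_gauge_le_one (hcpt : IsCompact C) (hconv : Convex ℝ C)
    (h0 : (0:ℝ×ℝ) ∈ interior C) {x : ℝ × ℝ} (hx : gauge C x ≤ 1) : x ∈ C := by
  have h := (gauge_le_one_iff_mem_closure hconv (mem_interior_iff_mem_nhds.1 h0)).1 hx
  rwa [hcpt.isClosed.closure_eq] at h

/-- Core packing-lemma step via a supporting functional. -/
lemma core (hcpt : IsCompact C) (hconv : Convex ℝ C) (h0 : (0:ℝ×ℝ) ∈ interior C)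
    {u v : ℝ × ℝ} (hu : gauge C u = 1) (hv : gauge C v = 1)
    (huv : gauge C (u - v) ≤ 1) {a b : ℝ} (ha : 1 ≤ a) (hb : 0 ≤ b) :
    1 ≤ gauge C (a • u + b • v) := by
  have hnhds : C ∈ 𝓝 0 := mem_interior_iff_mem_nhds.1 h0
  have hu' : u ∉ interior C := by
    rw [← gauge_lt_one_iff_mem_interior hconv hnhds]
    simp [hu]
  obtain ⟨f, hf⟩ := geometric_hahn_banach_open_point hconv.interior isOpen_interior hu'
  have hfu : 0 < f u := by simpa using hf 0 h0
  have hfC : ∀ c ∈ C, f c ≤ f u := by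
    intro c hc
    by_contra hlt
    push_neg at hlt
    have hfc : 0 < f c := lt_trans hfu hlt
    set t : ℝ := (f u / f c + 1) / 2 with htdef
    have h01 : f u / f c < 1 := (div_lt_one hfc).2 hlt
    have hdiv : 0 < f u / f c := div_pos hfu hfc
    have ht0 : 0 < t := by rw [htdef]; linarith
    have ht1 : t < 1 := by rw [htdef]; linarith
    have htc : t • c ∈ interior C := by
      rw [← gauge_lt_one_iff_mem_interior hconv hnhds, gauge_smul_of_nonneg ht0.le, smul_eq_mul]
      have h2 := gauge_le_one_of_mem hc
      have h3 := gauge_nonneg (s := C) c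
      nlinarith
    have h4 := hf _ htc
    rw [_root_.map_smul, smul_eq_mul] at h4
    have h5 : t * f c = (f u + f c) / 2 := by rw [htdef]; field_simp
    nlinarith
  have key : ∀ z : ℝ × ℝ, f z ≤ gauge C z * f u := by
    intro z
    by_contra hlt
    push_neg at hlt
    have hgz : gauge C z < f z / f u := (lt_div_iff₀ hfu).2 hlt
    set r : ℝ := (gauge C z + f z / f u) / 2 with hrdef
    have h1 : gauge C z < r := by rw [hrdef]; linarith
    have h2 : r < f z / f u := by rw [hrdef]; linarith
    have hr0 : 0 < r := lt_of_le_of_lt (gauge_nonneg _) h1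
    have hz : r⁻¹ • z ∈ C := by
      apply mem_of_gauge_le_one hcpt hconv h0
      rw [gauge_smul_of_nonneg (inv_nonneg.2 hr0.le), smul_eq_mul]
      rw [inv_mul_le_iff₀ hr0, mul_one]
      exact h1.le
    have h3 := hfC _ hz
    rw [_root_.map_smul, smul_eq_mul] at h3
    have h4 : f z ≤ r * f u := by
      have := mul_le_mul_of_nonneg_left h3 hr0.le
      rw [← mul_assoc, mul_inv_cancel₀ hr0.ne', one_mul] at this
      exact this
    have h5 : r * f u < f z := (lt_div_iff₀ hfu).1 h2
    linarith
  have hfv : 0 ≤ f v := by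
    have h1 := key (u - v)
    rw [_root_.map_sub] at h1
    nlinarith [hfu]
  have hmain : a * f u ≤ f (a • u + b • v) := by
    rw [_root_.map_add, _root_.map_smul, _root_.map_smul, smul_eq_mul, smul_eq_mul]
    nlinarith
  have h2 := key (a • u + b • v)
  nlinarith [gauge_nonneg (s := C) (a • u + b • v)]

/-- Hexagon membership lemma, nonnegative first coefficient case. -/
lemma hexmem₀ (hcpt : IsCompact C) (hconv : Convex ℝ C) (hsymm : C = -C)
    (h0 : (0:ℝ×ℝ) ∈ interior C) {p q : ℝ × ℝ}
    (hp : gauge C p ≤ 1) (hq : gauge C q ≤ 1) (hpq : gauge C (p - q) ≤ 1)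
    {a b : ℝ} (ha : 0 ≤ a) (h1 : |a| ≤ 1) (h2 : |b| ≤ 1) (h3 : |a + b| ≤ 1) :
    a • p + b • q ∈ C := by
  have habs1 := abs_le.1 h1
  have habs2 := abs_le.1 h2
  have habs3 := abs_le.1 h3
  apply mem_of_gauge_le_one hcpt hconv h0
  rcases le_or_gt 0 b with hb | hb
  · have hcb := gauge_combo hconv h0 ha hb p q
    nlinarith [gauge_nonneg (s := C) p, gauge_nonneg (s := C) q]
  · rcases le_or_gt 0 (a + b) with hab | hab
    · have hrw : a • p + b • q = (a + b) • p + (-b) • (p - q) := by module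
      rw [hrw]
      have hcb := gauge_combo hconv h0 (r := a+b) (s := -b) hab (by linarith) p (p - q)
      nlinarith [gauge_nonneg (s := C) p, gauge_nonneg (s := C) (p - q)]
    · have hrw : a • p + b • q = a • (p - q) + (-(a+b)) • (-q) := by module
      rw [hrw]
      have hnq : gauge C (-q) ≤ 1 := by
        rw [gauge_neg (fun y hy => symm_mem hsymm hy)]; exact hq
      have hcb := gauge_combo hconv h0 (r := a) (s := -(a+b)) ha (by linarith) (p - q) (-q)
      nlinarith [gauge_nonneg (s := C) (p - q), gauge_nonneg (s := C) (-q)]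

lemma hexmem (hcpt : IsCompact C) (hconv : Convex ℝ C) (hsymm : C = -C)
    (h0 : (0:ℝ×ℝ) ∈ interior C) {p q : ℝ × ℝ}
    (hp : gauge C p ≤ 1) (hq : gauge C q ≤ 1) (hpq : gauge C (p - q) ≤ 1)
    {a b : ℝ} (h1 : |a| ≤ 1) (h2 : |b| ≤ 1) (h3 : |a + b| ≤ 1) :
    a • p + b • q ∈ C := by
  rcases le_or_gt 0 a with ha | ha
  · exact hexmem₀ hcpt hconv hsymm h0 hp hq hpq ha h1 h2 h3
  · have h := hexmem₀ hcpt hconv hsymm h0 hp hq hpq (a := -a) (b := -b) (by linarith)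
      (by rwa [abs_neg]) (by rwa [abs_neg]) (by rw [show -a + -b = -(a+b) by ring, abs_neg]; exact h3)
    have hrw : a • p + b • q = -((-a) • p + (-b) • q) := by module
    rw [hrw]
    exact symm_mem hsymm h

/-- All nonzero integer combinations of an equilateral pair have gauge ≥ 1. -/
lemma intpack (hcpt : IsCompact C) (hconv : Convex ℝ C) (hsymm : C = -C)
    (h0 : (0:ℝ×ℝ) ∈ interior C) {p q : ℝ × ℝ}
    (hp : gauge C p = 1) (hq : gauge C q = 1) (hpq : gauge C (p - q) = 1) :
    ∀ m n : ℤ, ¬(m = 0 ∧ n = 0) → 1 ≤ gauge C ((m:ℝ) • p + (n:ℝ) • q) := by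
  have gneg : ∀ x : ℝ × ℝ, gauge C (-x) = gauge C x :=
    gauge_neg (fun y hy => symm_mem hsymm hy)
  have main : ∀ m n : ℤ, 0 < m → 1 ≤ gauge C ((m:ℝ) • p + (n:ℝ) • q) := by
    intro m n hm
    have hm1 : (1:ℝ) ≤ (m:ℝ) := by exact_mod_cast hm
    rcases le_or_gt 0 n with hn | hn
    · have hn0 : (0:ℝ) ≤ (n:ℝ) := by exact_mod_cast hn
      exact core hcpt hconv h0 hp hq hpq.le hm1 hn0
    · rcases le_or_gt 0 (m + n) with hmn | hmn
      · have h1 : (1:ℝ) ≤ ((-n : ℤ):ℝ) := by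
          have : 1 ≤ -n := by omega
          exact_mod_cast this
        have h2 : (0:ℝ) ≤ ((m + n : ℤ):ℝ) := by exact_mod_cast hmn
        have hc := core hcpt hconv h0 hpq hp (by
          have : p - q - p = -q := by abel
          rw [this, gneg]; exact hq.le) h1 h2
        have hrw : ((-n:ℤ):ℝ) • (p - q) + ((m+n:ℤ):ℝ) • p = (m:ℝ) • p + (n:ℝ) • q := by
          push_cast; module
        rwa [hrw] at hc
      · have h1 : (1:ℝ) ≤ ((m : ℤ):ℝ) := hm1
        have h2 : (1:ℝ) ≤ ((-(m+n) : ℤ):ℝ) := by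
          have : 1 ≤ -(m+n) := by omega
          exact_mod_cast this
        have hnq : gauge C (-q) = 1 := by rw [gneg]; exact hq
        have hc := core hcpt hconv h0 (a := ((m:ℤ):ℝ)) (b := ((-(m+n):ℤ):ℝ)) hpq hnq (by
          have : p - q - -q = p := by abel
          rw [this]; exact hp.le) h1 (le_trans zero_le_one h2)
        have hrw : ((m:ℤ):ℝ) • (p - q) + ((-(m+n):ℤ):ℝ) • (-q) = (m:ℝ) • p + (n:ℝ) • q := by
          push_cast; module
        rwa [hrw] at hc
  intro m n hmn
  rcases lt_trichotomy m 0 with hm | hm | hm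
  · have h := main (-m) (-n) (by omega)
    have hrw : ((-m:ℤ):ℝ) • p + ((-n:ℤ):ℝ) • q = -((m:ℝ) • p + (n:ℝ) • q) := by
      push_cast; module
    rw [hrw, gneg] at h
    exact h
  · subst hm
    have hn : n ≠ 0 := by tauto
    have hrw : ((0:ℤ):ℝ) • p + (n:ℝ) • q = (n:ℝ) • q := by push_cast; module
    rw [hrw, gauge_abs_smul hsymm, hq, mul_one]
    exact_mod_cast Int.one_le_abs (by omega)

  · exact main m n hm

/-- Existence of an "equilateral pair" on the boundary of `C`. -/
lemma exists_pair (hcpt : IsCompact C) (hconv : Convex ℝ C) (hsymm : C = -C)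
    (h0 : (0:ℝ×ℝ) ∈ interior C) :
    ∃ p q : ℝ × ℝ, gauge C p = 1 ∧ gauge C q = 1 ∧ gauge C (p - q) = 1 ∧
      p.1 * q.2 - p.2 * q.1 ≠ 0 := by
  have hnhds : C ∈ 𝓝 0 := mem_interior_iff_mem_nhds.1 h0
  have habs : Absorbent ℝ C := absorbent_nhds_zero hnhds
  have hvnb : Bornology.IsVonNBounded ℝ C := NormedSpace.isVonNBounded_of_isBounded ℝ hcpt.isBounded
  have hgpos : ∀ τ : ℝ, 0 < gauge C (Real.cos τ, Real.sin τ) := by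
    intro τ
    rw [gauge_pos habs hvnb]
    intro h
    rw [Prod.ext_iff] at h
    have h1 := Real.sin_sq_add_cos_sq τ
    simp only [Prod.fst_zero, Prod.snd_zero] at h
    rw [h.1, h.2] at h1
    norm_num at h1
  set b : ℝ → ℝ × ℝ := fun τ => (gauge C (Real.cos τ, Real.sin τ))⁻¹ • (Real.cos τ, Real.sin τ)
    with hbdef
  have hb1 : ∀ τ, gauge C (b τ) = 1 := by
    intro τ
    rw [hbdef]
    simp only
    rw [gauge_smul_of_nonneg (inv_nonneg.2 (hgpos τ).le), smul_eq_mul,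
      inv_mul_cancel₀ (hgpos τ).ne']
  have hc1 : Continuous fun τ : ℝ => (Real.cos τ, Real.sin τ) :=
    Real.continuous_cos.prodMk Real.continuous_sin
  have hcont : Continuous b :=
    (((continuous_gauge hconv hnhds).comp hc1).inv₀ (fun τ => (hgpos τ).ne')).smul hc1
  set p := b 0 with hpdef
  have hbpi : b Real.pi = -p := by
    rw [hpdef, hbdef]
    show (gauge C (Real.cos Real.pi, Real.sin Real.pi))⁻¹ • (Real.cos Real.pi, Real.sin Real.pi)
      = -((gauge C (Real.cos 0, Real.sin 0))⁻¹ • (Real.cos 0, Real.sin 0))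
    rw [Real.cos_pi, Real.sin_pi, Real.cos_zero, Real.sin_zero]
    have hneg : ((-1:ℝ), (0:ℝ)) = -((1:ℝ), (0:ℝ)) := by
      rw [Prod.neg_mk]; norm_num
    rw [hneg, gauge_neg (fun y hy => symm_mem hsymm hy), smul_neg]
  have hfc : Continuous (fun τ => gauge C (p - b τ)) :=
    (continuous_gauge hconv hnhds).comp (continuous_const.sub hcont)
  have hmem : (1:ℝ) ∈ Set.Icc (gauge C (p - b 0)) (gauge C (p - b Real.pi)) := by
    rw [hbpi, sub_neg_eq_add, ← hpdef, sub_self, gauge_zero]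
    have h2p : p + p = (2:ℝ) • p := by module
    rw [h2p, gauge_smul_of_nonneg (by norm_num : (0:ℝ) ≤ 2), smul_eq_mul, hb1 0]
    norm_num
  obtain ⟨τ, _, hτ1⟩ := intermediate_value_Icc Real.pi_pos.le hfc.continuousOn hmem
  have hPQ : gauge C (p - b τ) = 1 := hτ1
  set q := b τ with hqdef
  refine ⟨p, q, hb1 0, hb1 τ, hPQ, ?_⟩
  intro hdet
  have hpne : p ≠ 0 := by
    intro h
    have h2 := hb1 0
    rw [← hpdef, h, gauge_zero] at h2
    norm_num at h2
  have hqt : ∃ t : ℝ, q = t • p := by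
    by_cases h1 : p.1 = 0
    · have h2 : p.2 ≠ 0 := by
        intro h2
        exact hpne (Prod.ext h1 h2)
      refine ⟨q.2 / p.2, Prod.ext ?_ ?_⟩
      · show q.1 = (q.2 / p.2) * p.1
        rw [h1, mul_zero]
        have : p.2 * q.1 = 0 := by rw [h1] at hdet; linarith
        rcases mul_eq_zero.1 this with h | h
        · exact absurd h h2
        · exact h
      · show q.2 = (q.2 / p.2) * p.2
        field_simp
    · refine ⟨q.1 / p.1, Prod.ext ?_ ?_⟩
      · show q.1 = (q.1 / p.1) * p.1
        field_simp
      · show q.2 = (q.1 / p.1) * p.2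
        rw [div_mul_eq_mul_div, eq_div_iff h1]
        nlinarith [hdet]
  obtain ⟨t, ht⟩ := hqt
  have habs1 : |t| = 1 := by
    have h2 := hb1 τ
    rw [← hqdef, ht, gauge_abs_smul hsymm, hb1 0, mul_one] at h2
    exact h2
  rcases (abs_eq (by norm_num : (0:ℝ) ≤ 1)).1 habs1 with h1 | h1
  · rw [h1, one_smul] at ht
    rw [ht, sub_self, gauge_zero] at hPQ
    norm_num at hPQ
  · rw [h1] at ht
    have h3 : p - q = (2:ℝ) • p := by rw [ht]; module
    rw [h3, gauge_smul_of_nonneg (by norm_num : (0:ℝ) ≤ 2), smul_eq_mul, hb1 0] at hPQ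
    norm_num at hPQ

/-- The branch selection for the hexagonal covering. -/
lemma branchR (α β : ℝ) (hα0 : 0 ≤ α) (hα1 : α < 1) (hβ0 : 0 ≤ β) (hβ1 : β < 1) :
    ∃ d₁ d₂ : ℤ, |(α - d₁) - (β - d₂)| ≤ 1 ∧ |(α - d₁) + 2*(β - d₂)| ≤ 1 ∧
      |2*(α - d₁) + (β - d₂)| ≤ 1 := by
  rcases le_or_gt β α with hab | hab
  · rcases le_or_gt (2*α + β) 1 with hB | hB
    · exact ⟨0, 0, by push_cast; rw [abs_le]; constructor <;> linarith,
        by push_cast; rw [abs_le]; constructor <;> linarith,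
        by push_cast; rw [abs_le]; constructor <;> linarith⟩
    · rcases le_or_gt (α + 2*β) 2 with hA | hA
      · exact ⟨1, 0, by push_cast; rw [abs_le]; constructor <;> linarith,
          by push_cast; rw [abs_le]; constructor <;> linarith,
          by push_cast; rw [abs_le]; constructor <;> linarith⟩
      · exact ⟨1, 1, by push_cast; rw [abs_le]; constructor <;> linarith,
          by push_cast; rw [abs_le]; constructor <;> linarith,
          by push_cast; rw [abs_le]; constructor <;> linarith⟩
  · rcases le_or_gt (α + 2*β) 1 with hA | hA
    · exact ⟨0, 0, by push_cast; rw [abs_le]; constructor <;> linarith,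
        by push_cast; rw [abs_le]; constructor <;> linarith,
        by push_cast; rw [abs_le]; constructor <;> linarith⟩
    · rcases le_or_gt (2*α + β) 2 with hB | hB
      · exact ⟨0, 1, by push_cast; rw [abs_le]; constructor <;> linarith,
          by push_cast; rw [abs_le]; constructor <;> linarith,
          by push_cast; rw [abs_le]; constructor <;> linarith⟩
      · exact ⟨1, 1, by push_cast; rw [abs_le]; constructor <;> linarith,
          by push_cast; rw [abs_le]; constructor <;> linarith,
          by push_cast; rw [abs_le]; constructor <;> linarith⟩

/-- The hexagonal lattice covers. -/
lemma covers (hcpt : IsCompact C) (hconv : Convex ℝ C) (hsymm : C = -C)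
    (h0 : (0:ℝ×ℝ) ∈ interior C) {p q : ℝ × ℝ}
    (hp : gauge C p = 1) (hq : gauge C q = 1) (hpq : gauge C (p - q) = 1)
    (hd : p.1 * q.2 - p.2 * q.1 ≠ 0) (x : ℝ × ℝ) :
    ∃ z₁ z₂ : ℤ, x - ((z₁:ℝ) • (p + q) + (z₂:ℝ) • ((2:ℝ) • q - p)) ∈ C := by
  set d : ℝ := p.1 * q.2 - p.2 * q.1 with hddef
  set X : ℝ := (x.1 * q.2 - x.2 * q.1) / d with hXdef
  set Y : ℝ := (p.1 * x.2 - p.2 * x.1) / d with hYdef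
  have hXY : x = X • p + Y • q := by
    rw [Prod.ext_iff]
    constructor
    · show x.1 = (X • p + Y • q).1
      simp only [Prod.fst_add, Prod.smul_fst, smul_eq_mul]
      rw [hXdef, hYdef, hddef]
      have hd' : p.1 * q.2 - p.2 * q.1 ≠ 0 := hd
      rw [div_mul_eq_mul_div, div_mul_eq_mul_div, ← add_div, eq_div_iff hd']
      ring
    · show x.2 = (X • p + Y • q).2
      simp only [Prod.snd_add, Prod.smul_snd, smul_eq_mul]
      rw [hXdef, hYdef, hddef]
      have hd' : p.1 * q.2 - p.2 * q.1 ≠ 0 := hd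
      rw [div_mul_eq_mul_div, div_mul_eq_mul_div, ← add_div, eq_div_iff hd']
      ring
  set a' : ℝ := (2*X + Y)/3 with hadef
  set b' : ℝ := (Y - X)/3 with hbdef
  have hx' : x = a' • (p + q) + b' • ((2:ℝ) • q - p) := by
    have h1 : a' - b' = X := by rw [hadef, hbdef]; ring
    have h2 : a' + 2*b' = Y := by rw [hadef, hbdef]; ring
    rw [hXY, ← h1, ← h2]
    module
  obtain ⟨d₁, d₂, hA, hB, hAB⟩ := branchR (a' - ⌊a'⌋) (b' - ⌊b'⌋)
    (by linarith [Int.floor_le a']) (by linarith [Int.lt_floor_add_one a'])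
    (by linarith [Int.floor_le b']) (by linarith [Int.lt_floor_add_one b'])
  refine ⟨⌊a'⌋ + d₁, ⌊b'⌋ + d₂, ?_⟩
  have hres : x - (((⌊a'⌋ + d₁ : ℤ):ℝ) • (p + q) + ((⌊b'⌋ + d₂ : ℤ):ℝ) • ((2:ℝ) • q - p))
      = ((a' - ⌊a'⌋ - d₁) - (b' - ⌊b'⌋ - d₂)) • p
        + ((a' - ⌊a'⌋ - d₁) + 2*(b' - ⌊b'⌋ - d₂)) • q := by
    rw [hx']
    push_cast
    module
  rw [hres]
  apply hexmem hcpt hconv hsymm h0 hp.le hq.le hpq.le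
  · exact hA
  · exact hB
  · have : ((a' - ⌊a'⌋ - d₁) - (b' - ⌊b'⌋ - d₂)) + ((a' - ⌊a'⌋ - d₁) + 2*(b' - ⌊b'⌋ - d₂))
        = 2*((a' - ⌊a'⌋) - d₁) + ((b' - ⌊b'⌋) - d₂) := by ring
    rw [this]
    exact hAB

lemma li_of_det {v w : ℝ × ℝ} (h : v.1 * w.2 - v.2 * w.1 ≠ 0) :
    LinearIndependent ℝ ![v, w] := by
  rw [linearIndependent_fin2]
  constructor
  · simp only [Matrix.cons_val_one, Matrix.head_cons]
    intro hw
    apply h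
    rw [show w = 0 by simpa using hw]
    simp
  · intro a ha
    simp only [Matrix.cons_val_one, Matrix.head_cons, Matrix.cons_val_zero] at ha
    apply h
    rw [← ha]
    simp only [Prod.smul_fst, Prod.smul_snd, smul_eq_mul]
    ring

end ZongAux

/-- For every two-dimensional centrally symmetric convex domain,
`θ*(C)/δ*(C) ≤ 8(3 − 2√2)`. -/
theorem covering_packing_density_ratio (C : Set (ℝ × ℝ)) (hcpt : IsCompact C)
    (hconv : Convex ℝ C) (hint : (interior C).Nonempty) (hsymm : C = -C) :
    thetaStar C / deltaStar C ≤ 8 * (3 - 2 * Real.sqrt 2) := by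

  classical
  have h0 : (0 : ℝ × ℝ) ∈ interior C := ZongAux.zero_mem_int hconv hint hsymm
  obtain ⟨p, q, hp, hq, hpq, hd⟩ := ZongAux.exists_pair hcpt hconv hsymm h0
  set d : ℝ := p.1 * q.2 - p.2 * q.1 with hddef
  set V : ℝ := (volume C).toReal with hVdef
  set Tset : Set ℝ := {d : ℝ | ∃ v w : ℝ × ℝ, LinearIndependent ℝ ![v, w] ∧
    IsCovering C (latticeOf v w) ∧ d = (volume C).toReal / latDet v w} with hTdef
  set Sset : Set ℝ := {d : ℝ | ∃ v w : ℝ × ℝ, LinearIndependent ℝ ![v, w] ∧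
    IsPacking C (latticeOf v w) ∧ d = (volume C).toReal / latDet v w} with hSdef
  have hθdef : thetaStar C = sInf Tset := rfl
  have hδdef : deltaStar C = sSup Sset := rfl
  -- the covering lattice
  set v₁ : ℝ × ℝ := p + q with hv₁
  set v₂ : ℝ × ℝ := (2:ℝ) • q - p with hv₂
  have hdetc : v₁.1 * v₂.2 - v₁.2 * v₂.1 = 3 * d := by
    rw [hv₁, hv₂, hddef]
    simp only [Prod.fst_add, Prod.snd_add, Prod.fst_sub, Prod.snd_sub, Prod.smul_fst,
      Prod.smul_snd, smul_eq_mul]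
    ring
  have hlic : LinearIndependent ℝ ![v₁, v₂] := ZongAux.li_of_det (by
    rw [hdetc]
    intro h
    apply hd
    linarith)
  have hcov : IsCovering C (latticeOf v₁ v₂) := by
    rw [IsCovering, Set.eq_univ_iff_forall]
    intro x
    obtain ⟨z₁, z₂, hz⟩ := ZongAux.covers hcpt hconv hsymm h0 hp hq hpq hd x
    rw [Set.mem_iUnion₂]
    refine ⟨(z₁:ℝ) • v₁ + (z₂:ℝ) • v₂, ⟨z₁, z₂, rfl⟩, ?_⟩
    rw [Set.add_singleton]
    exact ⟨x - ((z₁:ℝ) • v₁ + (z₂:ℝ) • v₂), hz, by module⟩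
  have hTmem : V / latDet v₁ v₂ ∈ Tset := ⟨v₁, v₂, hlic, hcov, rfl⟩
  have hTlb : ∀ y ∈ Tset, (0:ℝ) ≤ y := by
    rintro y ⟨v, w, -, -, rfl⟩
    rw [latDet]
    exact div_nonneg ENNReal.toReal_nonneg (abs_nonneg _)
  have hθ : thetaStar C ≤ V / latDet v₁ v₂ := by
    rw [hθdef]
    exact csInf_le ⟨0, fun y hy => hTlb y hy⟩ hTmem
  -- the packing lattice
  set w₁ : ℝ × ℝ := (2:ℝ) • p with hw₁
  set w₂ : ℝ × ℝ := (2:ℝ) • q with hw₂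
  have hdetp : w₁.1 * w₂.2 - w₁.2 * w₂.1 = 4 * d := by
    rw [hw₁, hw₂, hddef]
    simp only [Prod.smul_fst, Prod.smul_snd, smul_eq_mul]
    ring
  have hlip : LinearIndependent ℝ ![w₁, w₂] := ZongAux.li_of_det (by
    rw [hdetp]
    intro h
    apply hd
    linarith)
  have gneg : ∀ x : ℝ × ℝ, gauge C (-x) = gauge C x :=
    gauge_neg (fun y hy => ZongAux.symm_mem hsymm hy)
  have hpack : IsPacking C (latticeOf w₁ w₂) := by
    intro x hx y hy hxy
    obtain ⟨m₁, m₂, rfl⟩ := hx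
    obtain ⟨n₁, n₂, rfl⟩ := hy
    have hmn : ¬(m₁ - n₁ = 0 ∧ m₂ - n₂ = 0) := by
      rintro ⟨h1, h2⟩
      apply hxy
      have e1 : m₁ = n₁ := by omega
      have e2 : m₂ = n₂ := by omega
      rw [e1, e2]
    have hkey := ZongAux.intpack hcpt hconv hsymm h0 hp hq hpq (m₁ - n₁) (m₂ - n₂) hmn
    have hdiff : ((m₁:ℝ) • w₁ + (m₂:ℝ) • w₂) - ((n₁:ℝ) • w₁ + (n₂:ℝ) • w₂)
        = (2:ℝ) • (((m₁ - n₁ : ℤ):ℝ) • p + ((m₂ - n₂ : ℤ):ℝ) • q) := by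
      rw [hw₁, hw₂]
      push_cast
      module
    have hg2 : 2 ≤ gauge C (((m₁:ℝ) • w₁ + (m₂:ℝ) • w₂) - ((n₁:ℝ) • w₁ + (n₂:ℝ) • w₂)) := by
      rw [hdiff, gauge_smul_of_nonneg (by norm_num : (0:ℝ) ≤ 2), smul_eq_mul]
      linarith
    rw [Set.disjoint_left]
    intro z hz1 hz2
    have hishom : ∀ t : ℝ × ℝ, interior (C + {t}) = (· + t) '' interior C := by
      intro t
      rw [Set.add_singleton]
      exact ((Homeomorph.addRight t).image_interior C).symm
    rw [hishom] at hz1 hz2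
    obtain ⟨c₁, hc₁, hzc₁⟩ := hz1
    obtain ⟨c₂, hc₂, hzc₂⟩ := hz2
    have hnhds : C ∈ 𝓝 0 := mem_interior_iff_mem_nhds.1 h0
    have hg1 : gauge C (z - ((m₁:ℝ) • w₁ + (m₂:ℝ) • w₂)) < 1 := by
      rw [← gauge_lt_one_iff_mem_interior hconv hnhds] at hc₁
      have : z - ((m₁:ℝ) • w₁ + (m₂:ℝ) • w₂) = c₁ := by rw [← hzc₁]; module
      rwa [this]
    have hg1' : gauge C (z - ((n₁:ℝ) • w₁ + (n₂:ℝ) • w₂)) < 1 := by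
      rw [← gauge_lt_one_iff_mem_interior hconv hnhds] at hc₂
      have : z - ((n₁:ℝ) • w₁ + (n₂:ℝ) • w₂) = c₂ := by rw [← hzc₂]; module
      rwa [this]
    have habs : Absorbent ℝ C := absorbent_nhds_zero hnhds
    have htri := gauge_add_le hconv habs
      (((m₁:ℝ) • w₁ + (m₂:ℝ) • w₂) - z) (z - ((n₁:ℝ) • w₁ + (n₂:ℝ) • w₂))
    rw [sub_add_sub_cancel] at htri
    rw [show ((m₁:ℝ) • w₁ + (m₂:ℝ) • w₂) - z = -(z - ((m₁:ℝ) • w₁ + (m₂:ℝ) • w₂)) by module,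
      gneg] at htri
    linarith
  have hSmem : V / latDet w₁ w₂ ∈ Sset := ⟨w₁, w₂, hlip, hpack, rfl⟩
  -- determinant values
  have habsd : (0:ℝ) < |d| := abs_pos.2 hd
  have hld1 : latDet v₁ v₂ = 3 * |d| := by
    rw [latDet, hdetc, abs_mul]
    norm_num
  have hld2 : latDet w₁ w₂ = 4 * |d| := by
    rw [latDet, hdetp, abs_mul]
    norm_num
  have hVpos : (0:ℝ) ≤ V := ENNReal.toReal_nonneg
  have hratio : V / latDet v₁ v₂ = (4/3) * (V / latDet w₁ w₂) := by
    rw [hld1, hld2]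
    field_simp
  -- constant bounds
  have hsqrt2 : Real.sqrt 2 ≤ 17/12 := by
    nlinarith [Real.sq_sqrt (show (0:ℝ) ≤ 2 by norm_num), Real.sqrt_nonneg 2]
  have hconst : (4:ℝ)/3 ≤ 8 * (3 - 2 * Real.sqrt 2) := by nlinarith
  have hconst0 : (0:ℝ) ≤ 8 * (3 - 2 * Real.sqrt 2) := by nlinarith
  rcases lt_trichotomy (deltaStar C) 0 with hδ | hδ | hδ
  · have hθ0 : 0 ≤ thetaStar C := by
      rw [hθdef]
      exact Real.sInf_nonneg hTlb
    have hle : thetaStar C / deltaStar C ≤ 0 := div_nonpos_of_nonneg_of_nonpos hθ0 hδ.le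
    linarith
  · rw [hδ, div_zero]
    exact hconst0
  · have hbdd : BddAbove Sset := by
      by_contra hB
      rw [hδdef, Real.sSup_of_not_bddAbove hB] at hδ
      exact lt_irrefl _ hδ
    have hsle : V / latDet w₁ w₂ ≤ deltaStar C := by
      rw [hδdef]
      exact le_csSup hbdd hSmem
    have hsnn : (0:ℝ) ≤ V / latDet w₁ w₂ := by
      rw [hld2]
      positivity
    rw [div_le_iff₀ hδ]
    calc thetaStar C ≤ V / latDet v₁ v₂ := hθ
    _ = (4/3) * (V / latDet w₁ w₂) := hratio
    _ ≤ (4/3) * deltaStar C := by nlinarith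
    _ ≤ (8 * (3 - 2 * Real.sqrt 2)) * deltaStar C := by nlinarith
end
end
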